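/- For any ε > 0, any w ∈ ℝ^L, and any j, k ∈ [L], if w_j ≤ w_k and j ∈ argmax^ε(w), then k ∈ argmax^ε(w). -/

import Mathlib

noncomputable section

/-- The set `R_j^ε = {w ∈ ℝ^L : w_j ≥ max_{ℓ≠j} w_ℓ + ε/√2}`. -/
def Rset (L : ℕ) (ε : ℝ) (j : Fin L) : Set (EuclideanSpace ℝ (Fin L)) :=
  {w | ∀ ℓ : Fin L, ℓ ≠ j → w ℓ + ε / Real.sqrt 2 ≤ w j}

/-- The inflated argmax: `argmax^ε(w) = {j ∈ [L] : dist(w, R_j^ε) < ε}`. -/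
def inflatedArgmax (L : ℕ) (ε : ℝ) (w : EuclideanSpace ℝ (Fin L)) : Set (Fin L) :=
  {j | Metric.infDist w (Rset L ε j) < ε}

lemma Rset_nonempty (L : ℕ) (ε : ℝ) (hε : 0 < ε) (j : Fin L) :
    (Rset L ε j).Nonempty := by
  refine ⟨(WithLp.toLp 2 (fun i => if i = j then ε / Real.sqrt 2 else 0) : EuclideanSpace ℝ (Fin L)), ?_⟩
  intro ℓ hℓ
  simp [hℓ]

/-- Monotonicity of the inflated argmax in `w`: if `w_j ≤ w_k` and
`j ∈ argmax^ε(w)`, then `k ∈ argmax^ε(w)`. -/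
theorem inflatedArgmax_mono_coord (L : ℕ) (hL : 2 ≤ L) (ε : ℝ) (hε : 0 < ε)
    (w : EuclideanSpace ℝ (Fin L)) (j k : Fin L) (hjk : w j ≤ w k)
    (hj : j ∈ inflatedArgmax L ε w) :
    k ∈ inflatedArgmax L ε w := by
  rcases eq_or_ne j k with rfl | hne
  · exact hj
  simp only [inflatedArgmax, Set.mem_setOf_eq] at hj ⊢
  rw [Metric.infDist_lt_iff (Rset_nonempty L ε hε j)] at hj
  obtain ⟨v, hv, hdv⟩ := hj
  set v' : EuclideanSpace ℝ (Fin L) := WithLp.toLp 2 (fun i => v (Equiv.swap j k i)) with hv'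
  have hv'k : v' k = v j := by
    show v (Equiv.swap j k k) = v j
    rw [Equiv.swap_apply_right]
  have hv'mem : v' ∈ Rset L ε k := by
    intro ℓ hℓ
    have hswap : Equiv.swap j k ℓ ≠ j := by
      intro h
      apply hℓ
      have := (Equiv.swap j k).injective (a₁ := ℓ) (a₂ := k)
      apply this
      rw [h, Equiv.swap_apply_right]
    have := hv (Equiv.swap j k ℓ) hswap
    rw [hv'k]
    exact this
  have hvjk : v k ≤ v j := by
    have := hv k (Ne.symm hne)
    have h2 : 0 < ε / Real.sqrt 2 := by positivity
    linarith
  have hdist : dist w v' ≤ dist w v := by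
    rw [EuclideanSpace.dist_eq, EuclideanSpace.dist_eq]
    apply Real.sqrt_le_sqrt
    simp only [Real.dist_eq, sq_abs]
    have key : ∀ i : Fin L, i ≠ j → i ≠ k → v' i = v i := by
      intro i hij hik
      show v (Equiv.swap j k i) = v i
      rw [Equiv.swap_apply_of_ne_of_ne hij hik]
    have hsum : ∑ i, ((w i - v i) ^ 2 - (w i - v' i) ^ 2) =
        ((w j - v j) ^ 2 - (w j - v' j) ^ 2) + ((w k - v k) ^ 2 - (w k - v' k) ^ 2) := by
      rw [← Finset.sum_subset (Finset.subset_univ ({j, k} : Finset (Fin L)))]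
      · rw [Finset.sum_insert (by simp [hne]), Finset.sum_singleton]
      · intro i _ hi
        simp only [Finset.mem_insert, Finset.mem_singleton, not_or] at hi
        rw [key i hi.1 hi.2]
        ring
    have hv'j : v' j = v k := by
      show v (Equiv.swap j k j) = v k
      rw [Equiv.swap_apply_left]
    have : (0:ℝ) ≤ ∑ i, ((w i - v i) ^ 2 - (w i - v' i) ^ 2) := by
      rw [hsum, hv'j, hv'k]
      nlinarith [mul_nonneg (sub_nonneg.2 hjk) (sub_nonneg.2 hvjk)]
    have := Finset.sum_sub_distrib (f := fun i => (w i - v i) ^ 2)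
      (g := fun i => (w i - v' i) ^ 2) (s := Finset.univ) ▸ this
    linarith [this]
  calc Metric.infDist w (Rset L ε k) ≤ dist w v' := Metric.infDist_le_dist_of_mem hv'mem
    _ ≤ dist w v := hdist
    _ < ε := hdv
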